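/- For every set I ⊆ ℕ there exists a sequence (F_i)_{i ∈ ℕ} of equivalence relations on ℕ such that each F_i is computable and has only finitely many equivalence classes, and the infimum ⨅ i, F_i relates x and y iff x = y or (x ∈ I and y ∈ I), i.e. it is the singular equivalence relation with non-singleton class I. -/

import Mathlib

private lemma compAux (L : List Bool) (n : ℕ) :
    ComputablePred fun p : ℕ × ℕ =>
      p.1 = p.2 ∨ ((n < p.1 ∨ L.getD p.1 false = true) ∧ (n < p.2 ∨ L.getD p.2 false = true)) := by
  refine ComputablePred.computable_iff.2 ⟨fun p => decide (p.1 = p.2) ||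
      ((decide (n < p.1) || L.getD p.1 false) && (decide (n < p.2) || L.getD p.2 false)), ?_, ?_⟩
  · exact Primrec.to_comp <| Primrec.or.comp (Primrec.eq.comp Primrec.fst Primrec.snd).decide
      (Primrec.and.comp
        (Primrec.or.comp (Primrec.nat_lt.comp (.const n) .fst).decide
          ((Primrec.list_getD false).comp (.const L) .fst))
        (Primrec.or.comp (Primrec.nat_lt.comp (.const n) .snd).decide
          ((Primrec.list_getD false).comp (.const L) .snd)))
  · funext p
    simp [eq_iff_iff, Bool.or_eq_true, Bool.and_eq_true, decide_eq_true_eq]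

/-- For every `I ⊆ ℕ` there is a sequence of computable equivalence relations on ℕ,
each with finitely many classes, whose infimum is the singular equivalence relation
with non-singleton class `I`. -/
theorem singular_as_iInf_of_computable (I : Set ℕ) :
    ∃ F : ℕ → Setoid ℕ,
      (∀ i, ComputablePred fun p : ℕ × ℕ => (F i).r p.1 p.2) ∧
      (∀ i, Finite (Quotient (F i))) ∧
      (∀ x y : ℕ, (⨅ i, F i).r x y ↔ (x = y ∨ (x ∈ I ∧ y ∈ I))) := by
  classical
  set C : ℕ → Set ℕ := fun n => {x | x ∈ I ∨ n < x} with hC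
  refine ⟨fun n => ⟨fun x y => x = y ∨ (x ∈ C n ∧ y ∈ C n), ?_, ?_, ?_⟩, ?_, ?_, ?_⟩
  · exact fun x => Or.inl rfl
  · rintro x y (rfl | h); exacts [Or.inl rfl, Or.inr ⟨h.2, h.1⟩]
  · rintro x y z (rfl | h) (rfl | h')
    exacts [Or.inl rfl, Or.inr h', Or.inr h, Or.inr ⟨h.1, h'.2⟩]
  · intro n
    have key : ∀ x, x ∈ C n ↔ (n < x ∨ ((List.range (n+1)).map
        (fun k => decide (k ∈ I))).getD x false = true) := by
      intro x
      rcases lt_or_ge n x with h | h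
      · simp [hC, h]
      · have hx : x < n + 1 := Nat.lt_succ_of_le h
        simp [hC, Nat.not_lt.2 h, List.getD_eq_getElem?_getD,
          List.getElem?_map, List.getElem?_range hx, not_lt_of_ge h]
    have := compAux ((List.range (n+1)).map (fun k => decide (k ∈ I))) n
    convert this using 2 with p
    show _ ↔ _
    constructor
    · rintro (h | ⟨h1, h2⟩)
      exacts [Or.inl h, Or.inr ⟨(key p.1).1 h1, (key p.2).1 h2⟩]
    · rintro (h | ⟨h1, h2⟩)
      exacts [Or.inl h, Or.inr ⟨(key p.1).2 h1, (key p.2).2 h2⟩]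
  · intro n
    set f : ℕ → Fin (n + 2) := fun x =>
      if hx : x ∈ C n then ⟨n + 1, Nat.lt_succ_self _⟩
      else ⟨x, by
        have : ¬ n < x := fun h => hx (Or.inr h)
        omega⟩ with hf
    have hlift : ∀ x y : ℕ, x = y ∨ (x ∈ C n ∧ y ∈ C n) → f x = f y := by
      rintro x y (rfl | ⟨h1, h2⟩)
      · rfl
      · simp [hf, h1, h2]
    have hinj : Function.Injective (Quot.lift f hlift) := by
      rintro ⟨x⟩ ⟨y⟩ h
      refine Quot.sound ?_
      
      by_cases hx : x ∈ C n <;> by_cases hy : y ∈ C n <;>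
        simp [hf, hx, hy, Fin.ext_iff] at h
      · exact Or.inr ⟨hx, hy⟩
      · have hy' : ¬ n < y := fun hh => hy (Or.inr hh)
        omega
      · have hx' : ¬ n < x := fun hh => hx (Or.inr hh)
        omega
      · exact Or.inl h
    exact Finite.of_injective _ hinj
  · intro x y
    have hinf : (⨅ i, (⟨fun a b => a = b ∨ (a ∈ C i ∧ b ∈ C i), fun a => Or.inl rfl,
        by rintro a b (rfl | h); exacts [Or.inl rfl, Or.inr ⟨h.2, h.1⟩],
        by rintro a b c (rfl | h) (rfl | h')
           exacts [Or.inl rfl, Or.inr h', Or.inr h, Or.inr ⟨h.1, h'.2⟩]⟩ : Setoid ℕ)).r x y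
        ↔ ∀ i : ℕ, x = y ∨ (x ∈ C i ∧ y ∈ C i) := by
      exact ⟨fun h i => h _ ⟨i, rfl⟩, fun h s hs => by obtain ⟨i, rfl⟩ := hs; exact h i⟩
    rw [hinf]
    constructor
    · intro h
      rcases h (max x y) with h | ⟨h1, h2⟩
      · exact Or.inl h
      · refine Or.inr ⟨?_, ?_⟩
        · rcases h1 with h1 | h1; exacts [h1, absurd (le_max_left x y) (not_le_of_gt h1)]
        · rcases h2 with h2 | h2; exacts [h2, absurd (le_max_right x y) (not_le_of_gt h2)]
    · rintro (rfl | ⟨h1, h2⟩) i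
      exacts [Or.inl rfl, Or.inr ⟨Or.inl h1, Or.inl h2⟩]
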